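/- Let U₁ and U₂ be 2×2 unitary matrices with U₁² proportional to U₂² and U₁², U₂² not proportional to the identity. Then U₁ and U₂ commute. (Specifically, there is a common orthonormal eigenbasis {v₁,v₂} with U₁ = e^{iθ₁}(|v₁⟩⟨v₁| + e^{iθ}|v₂⟩⟨v₂|) and U₂ = e^{iθ₂}(|v₁⟩⟨v₁| − e^{iθ}|v₂⟩⟨v₂|).) -/

import Mathlib

open Matrix

/-- The rank-one operator |v⟩⟨w| on ℂ². -/
noncomputable def outer (v w : Fin 2 → ℂ) : Matrix (Fin 2) (Fin 2) ℂ :=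
  Matrix.vecMulVec v (star w)

namespace Stmt18Aux

lemma outer_mulVec (v w x : Fin 2 → ℂ) :
    (outer v w) *ᵥ x = (star w ⬝ᵥ x) • v := by
  funext i
  simp [outer, mulVec, dotProduct, vecMulVec, Fin.sum_univ_two]
  ring

lemma mul_outer (M : Matrix (Fin 2) (Fin 2) ℂ) (v w : Fin 2 → ℂ) :
    M * outer v w = outer (M *ᵥ v) w := by
  ext i j
  simp [outer, mul_apply, vecMulVec, mulVec, dotProduct, Fin.sum_univ_two]
  ring

lemma outer_mul_outer (v w v' w' : Fin 2 → ℂ) :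
    outer v w * outer v' w' = (star w ⬝ᵥ v') • outer v w' := by
  ext i j
  simp [outer, mul_apply, vecMulVec, dotProduct, Fin.sum_univ_two]
  ring

lemma smul_outer (a : ℂ) (v w : Fin 2 → ℂ) :
    outer (a • v) w = a • outer v w := by
  ext i j
  simp [outer, vecMulVec]
  ring

lemma dot_swap (v w : Fin 2 → ℂ) :
    star v ⬝ᵥ w = star (star w ⬝ᵥ v) := by
  simp [dotProduct, Fin.sum_univ_two, StarMul.star_mul]

lemma spectral (M : Matrix (Fin 2) (Fin 2) ℂ) (v₁ v₂ : Fin 2 → ℂ)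
    (hc : outer v₁ v₁ + outer v₂ v₂ = 1) (l m : ℂ)
    (h1 : M *ᵥ v₁ = l • v₁) (h2 : M *ᵥ v₂ = m • v₂) :
    M = l • outer v₁ v₁ + m • outer v₂ v₂ := by
  calc M = M * (outer v₁ v₁ + outer v₂ v₂) := by rw [hc, mul_one]
  _ = outer (M *ᵥ v₁) v₁ + outer (M *ᵥ v₂) v₂ := by rw [mul_add, mul_outer, mul_outer]
  _ = _ := by rw [h1, h2, smul_outer, smul_outer]

lemma decomp {v₁ v₂ : Fin 2 → ℂ}
    (hc : outer v₁ v₁ + outer v₂ v₂ = 1) (x : Fin 2 → ℂ) :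
    x = (star v₁ ⬝ᵥ x) • v₁ + (star v₂ ⬝ᵥ x) • v₂ := by
  have h := congrArg (· *ᵥ x) hc
  simpa only [add_mulVec, outer_mulVec, one_mulVec] using h.symm

lemma unitary_inner {U : Matrix (Fin 2) (Fin 2) ℂ} (hU : Uᴴ * U = 1)
    (x y : Fin 2 → ℂ) :
    star (U *ᵥ x) ⬝ᵥ (U *ᵥ y) = star x ⬝ᵥ y := by
  rw [star_mulVec, dotProduct_mulVec, vecMul_vecMul, hU, vecMul_one]

lemma unit_eig {U : Matrix (Fin 2) (Fin 2) ℂ} (hU : Uᴴ * U = 1)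
    {v : Fin 2 → ℂ} (hv : star v ⬝ᵥ v = 1) {l : ℂ} (hev : U *ᵥ v = l • v) :
    star l * l = 1 := by
  have h := unitary_inner hU v v
  rw [hev, star_smul, smul_dotProduct, dotProduct_smul, hv] at h
  simpa [smul_eq_mul] using h

lemma ortho_pair (v : Fin 2 → ℂ) (h : star v ⬝ᵥ v = 1) :
    star (![-(star (v 1)), star (v 0)]) ⬝ᵥ ![-(star (v 1)), star (v 0)] = 1 ∧
    star v ⬝ᵥ ![-(star (v 1)), star (v 0)] = 0 ∧
    outer v v + outer ![-(star (v 1)), star (v 0)] ![-(star (v 1)), star (v 0)] = 1 := by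
  rw [dotProduct, Fin.sum_univ_two] at h
  simp only [Pi.star_apply] at h
  refine ⟨?_, ?_, ?_⟩
  · simp only [dotProduct, Fin.sum_univ_two, Pi.star_apply, Matrix.cons_val_zero,
      Matrix.cons_val_one, Matrix.head_cons, star_neg, star_star]
    linear_combination h
  · simp only [dotProduct, Fin.sum_univ_two, Pi.star_apply, Matrix.cons_val_zero,
      Matrix.cons_val_one, Matrix.head_cons, star_neg, star_star]
    ring
  · rw [← Matrix.ext_iff]
    simp only [Fin.forall_fin_two]
    refine ⟨⟨?_, ?_⟩, ?_, ?_⟩ <;>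
      simp only [Matrix.add_apply, outer, vecMulVec_apply, Pi.star_apply,
        Matrix.cons_val_zero, Matrix.cons_val_one, Matrix.head_cons, star_neg, star_star]
    · rw [Matrix.one_apply_eq]; linear_combination h
    · rw [Matrix.one_apply_ne (by decide)]; ring
    · rw [Matrix.one_apply_ne (by decide)]; ring
    · rw [Matrix.one_apply_eq]; linear_combination h

lemma phase (l : ℂ) (h : star l * l = 1) :
    ∃ θ : ℝ, l = Complex.exp (Complex.I * θ) := by
  have hns : (Complex.normSq l : ℂ) = 1 := by
    rw [← Complex.mul_conj, ← Complex.star_def, mul_comm]; exact h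
  have habs : ‖l‖ = 1 := by
    have h2 : Complex.normSq l = 1 := by exact_mod_cast hns
    rw [← Complex.sq_norm] at h2
    nlinarith [norm_nonneg l]
  refine ⟨Complex.arg l, ?_⟩
  rw [mul_comm]
  have h3 := Complex.norm_mul_exp_arg_mul_I l
  rw [habs] at h3
  simpa using h3.symm

lemma mulD {v₁ v₂ : Fin 2 → ℂ} (h1 : star v₁ ⬝ᵥ v₁ = 1) (h2 : star v₂ ⬝ᵥ v₂ = 1)
    (h12 : star v₁ ⬝ᵥ v₂ = 0) (h21 : star v₂ ⬝ᵥ v₁ = 0) (l m a b : ℂ) :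
    (l • outer v₁ v₁ + m • outer v₂ v₂) * (a • outer v₁ v₁ + b • outer v₂ v₂)
      = (l * a) • outer v₁ v₁ + (m * b) • outer v₂ v₂ := by
  simp only [add_mul, mul_add, smul_mul_assoc, mul_smul_comm, outer_mul_outer,
    h1, h2, h12, h21, smul_smul, zero_smul, smul_zero]
  module

lemma key {U : Matrix (Fin 2) (Fin 2) ℂ} (hU : Uᴴ * U = 1) {v₁ v₂ : Fin 2 → ℂ}
    (hc : outer v₁ v₁ + outer v₂ v₂ = 1) (h12 : star v₁ ⬝ᵥ v₂ = 0)
    {l : ℂ} (hl0 : l ≠ 0) (hev : U *ᵥ v₁ = l • v₁) :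
    U *ᵥ v₂ = (star v₂ ⬝ᵥ (U *ᵥ v₂)) • v₂ := by
  have horth : star v₁ ⬝ᵥ (U *ᵥ v₂) = 0 := by
    have h := unitary_inner hU v₁ v₂
    rw [hev, h12, star_smul, smul_dotProduct] at h
    have hsl : star l ≠ 0 := star_ne_zero.mpr hl0
    rw [smul_eq_mul] at h
    exact (mul_eq_zero.mp h).resolve_left hsl
  calc U *ᵥ v₂ = (star v₁ ⬝ᵥ (U *ᵥ v₂)) • v₁ + (star v₂ ⬝ᵥ (U *ᵥ v₂)) • v₂ := decomp hc _
  _ = _ := by rw [horth, zero_smul, zero_add]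

end Stmt18Aux

open Stmt18Aux

/-- If U₁, U₂ are 2×2 unitaries with U₁² proportional to U₂² and neither square
proportional to the identity, then U₁ and U₂ commute; specifically, they have a common
orthonormal eigenbasis {v₁, v₂}, in which each is a phase times diag(1, phase). -/
theorem stmt18 (U₁ U₂ : Matrix (Fin 2) (Fin 2) ℂ)
    (h₁u : U₁ᴴ * U₁ = 1) (h₁u' : U₁ * U₁ᴴ = 1)
    (h₂u : U₂ᴴ * U₂ = 1) (h₂u' : U₂ * U₂ᴴ = 1)
    (hprop : ∃ c : ℂ, c ≠ 0 ∧ U₁ ^ 2 = c • U₂ ^ 2)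
    (h₁ns : ∀ c : ℂ, U₁ ^ 2 ≠ c • (1 : Matrix (Fin 2) (Fin 2) ℂ))
    (h₂ns : ∀ c : ℂ, U₂ ^ 2 ≠ c • (1 : Matrix (Fin 2) (Fin 2) ℂ)) :
    Commute U₁ U₂ ∧
      ∃ (v₁ v₂ : Fin 2 → ℂ) (θ₁ θ θ₂ θ' : ℝ),
        dotProduct (star v₁) v₁ = 1 ∧ dotProduct (star v₂) v₂ = 1 ∧
        dotProduct (star v₁) v₂ = 0 ∧
        U₁ = Complex.exp (Complex.I * θ₁) •
              (outer v₁ v₁ + Complex.exp (Complex.I * θ) • outer v₂ v₂) ∧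
        U₂ = Complex.exp (Complex.I * θ₂) •
              (outer v₁ v₁ + Complex.exp (Complex.I * θ') • outer v₂ v₂) := by
  classical
  obtain ⟨c, hc0, hcprop⟩ := hprop
  -- an eigenvector of U₁
  obtain ⟨l, v₀, hv₀ne, hv₀⟩ : ∃ (l : ℂ) (v : Fin 2 → ℂ), v ≠ 0 ∧ U₁ *ᵥ v = l • v := by
    obtain ⟨μ, hμ⟩ := Module.End.exists_eigenvalue (Matrix.mulVecLin U₁)
    obtain ⟨v, hv⟩ := hμ.exists_hasEigenvector
    exact ⟨μ, v, hv.right, by simpa [Matrix.mulVecLin_apply] using hv.apply_eq_smul⟩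
  -- normalize it
  have hvs : star v₀ ⬝ᵥ v₀ = ((Complex.normSq (v₀ 0) + Complex.normSq (v₀ 1) : ℝ) : ℂ) := by
    simp [dotProduct, Fin.sum_univ_two, Complex.normSq_eq_conj_mul_self, Complex.star_def]
  have hpos : 0 < Complex.normSq (v₀ 0) + Complex.normSq (v₀ 1) := by
    have h0 : 0 ≤ Complex.normSq (v₀ 0) := Complex.normSq_nonneg _
    have h1 : 0 ≤ Complex.normSq (v₀ 1) := Complex.normSq_nonneg _
    rcases Fin.exists_fin_two.mp (Function.ne_iff.mp hv₀ne) with hi | hi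
    · have := Complex.normSq_pos.mpr hi; linarith
    · have := Complex.normSq_pos.mpr hi; linarith
  set s : ℝ := Real.sqrt (Complex.normSq (v₀ 0) + Complex.normSq (v₀ 1)) with hsdef
  have hs0 : 0 < s := Real.sqrt_pos.mpr hpos
  have hsne : (s : ℂ) ≠ 0 := by exact_mod_cast hs0.ne'
  set v₁ : Fin 2 → ℂ := ((s : ℂ))⁻¹ • v₀ with hv₁def
  have h1 : star v₁ ⬝ᵥ v₁ = 1 := by
    rw [hv₁def, star_smul, smul_dotProduct, dotProduct_smul, hvs]
    have hstar : star ((s:ℂ)⁻¹) = (s:ℂ)⁻¹ := by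
      simp [Complex.star_def, Complex.conj_ofReal]
    have hcast : ((Complex.normSq (v₀ 0) + Complex.normSq (v₀ 1) : ℝ) : ℂ) = (s:ℂ) * (s:ℂ) := by
      rw [← Real.mul_self_sqrt hpos.le]; push_cast [hsdef]; ring
    rw [hstar, hcast, smul_eq_mul, smul_eq_mul]
    field_simp
  have hv₁ : U₁ *ᵥ v₁ = l • v₁ := by
    rw [hv₁def, mulVec_smul, hv₀, smul_comm]
  obtain ⟨h2, h12, hc⟩ := Stmt18Aux.ortho_pair v₁ h1
  set v₂ : Fin 2 → ℂ := ![-(star (v₁ 1)), star (v₁ 0)] with hv₂def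
  have h21 : star v₂ ⬝ᵥ v₁ = 0 := by rw [dot_swap, h12, star_zero]
  -- U₁ diagonalizes
  have hl : star l * l = 1 := unit_eig h₁u h1 hv₁
  have hl0 : l ≠ 0 := by rintro rfl; simp at hl
  have hv₂ : U₁ *ᵥ v₂ = (star v₂ ⬝ᵥ (U₁ *ᵥ v₂)) • v₂ := key h₁u hc h12 hl0 hv₁
  set m : ℂ := star v₂ ⬝ᵥ (U₁ *ᵥ v₂) with hmdef
  have hm : star m * m = 1 := unit_eig h₁u h2 hv₂
  have hU₁d : U₁ = l • outer v₁ v₁ + m • outer v₂ v₂ := spectral U₁ v₁ v₂ hc l m hv₁ hv₂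
  have hU₁sq : U₁ ^ 2 = (l*l) • outer v₁ v₁ + (m*m) • outer v₂ v₂ := by
    rw [pow_two]
    nth_rewrite 1 [hU₁d]
    nth_rewrite 1 [hU₁d]
    rw [mulD h1 h2 h12 h21]
  have hlm : l * l ≠ m * m := by
    intro h
    apply h₁ns (l*l)
    rw [hU₁sq, h, ← smul_add, hc]
  -- U₂ squared diagonalizes
  have hU₂sq : U₂ ^ 2 = (c⁻¹*(l*l)) • outer v₁ v₁ + (c⁻¹*(m*m)) • outer v₂ v₂ := by
    have hinv : U₂ ^ 2 = c⁻¹ • U₁ ^ 2 := by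
      rw [hcprop, smul_smul, inv_mul_cancel₀ hc0, one_smul]
    rw [hinv, hU₁sq, smul_add, smul_smul, smul_smul]
  have hab : c⁻¹*(l*l) ≠ c⁻¹*(m*m) :=
    fun h => hlm (mul_left_cancel₀ (inv_ne_zero hc0) h)
  have hsqv₁ : U₂ ^ 2 *ᵥ v₁ = (c⁻¹*(l*l)) • v₁ := by
    rw [hU₂sq, add_mulVec, smul_mulVec, smul_mulVec, outer_mulVec, outer_mulVec,
      h1, h21]
    simp
  -- U₂ preserves the eigenline of v₁
  have hw : U₂ ^ 2 *ᵥ (U₂ *ᵥ v₁) = (c⁻¹*(l*l)) • (U₂ *ᵥ v₁) := by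
    have hcomm : U₂ ^ 2 * U₂ = U₂ * U₂ ^ 2 := by rw [← pow_succ, ← pow_succ']
    rw [mulVec_mulVec, hcomm, ← mulVec_mulVec, hsqv₁, mulVec_smul]
  have hwd := Stmt18Aux.decomp hc (U₂ *ᵥ v₁)
  have hβ : star v₂ ⬝ᵥ (U₂ *ᵥ v₁) = 0 := by
    have e1 : star v₂ ⬝ᵥ (U₂ ^ 2 *ᵥ (U₂ *ᵥ v₁))
        = (c⁻¹*(l*l)) * (star v₂ ⬝ᵥ (U₂ *ᵥ v₁)) := by
      rw [hw, dotProduct_smul, smul_eq_mul]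
    have e2 : star v₂ ⬝ᵥ (U₂ ^ 2 *ᵥ (U₂ *ᵥ v₁))
        = (c⁻¹*(m*m)) * (star v₂ ⬝ᵥ (U₂ *ᵥ v₁)) := by
      rw [hU₂sq, add_mulVec, smul_mulVec, smul_mulVec, outer_mulVec, outer_mulVec]
      simp [dotProduct_add, dotProduct_smul, h21, h2, smul_eq_mul]
    have h := e1.symm.trans e2
    by_contra hβ0
    exact hab (mul_right_cancel₀ hβ0 h)
  have hU₂v₁ : U₂ *ᵥ v₁ = (star v₁ ⬝ᵥ (U₂ *ᵥ v₁)) • v₁ := by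
    conv_lhs => rw [hwd]
    rw [hβ, zero_smul, add_zero]
  set α : ℂ := star v₁ ⬝ᵥ (U₂ *ᵥ v₁) with hαdef
  have hα : star α * α = 1 := unit_eig h₂u h1 hU₂v₁
  have hα0 : α ≠ 0 := by rintro h; rw [h] at hα; simp at hα
  have hU₂v₂ : U₂ *ᵥ v₂ = (star v₂ ⬝ᵥ (U₂ *ᵥ v₂)) • v₂ := key h₂u hc h12 hα0 hU₂v₁
  set δ : ℂ := star v₂ ⬝ᵥ (U₂ *ᵥ v₂) with hδdef
  have hδ : star δ * δ = 1 := unit_eig h₂u h2 hU₂v₂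
  have hU₂d : U₂ = α • outer v₁ v₁ + δ • outer v₂ v₂ := spectral U₂ v₁ v₂ hc α δ hU₂v₁ hU₂v₂
  -- commutation
  have hcom : U₁ * U₂ = U₂ * U₁ := by
    rw [hU₁d, hU₂d, mulD h1 h2 h12 h21, mulD h1 h2 h12 h21, mul_comm l α, mul_comm m δ]
  -- phases
  obtain ⟨θ₁, hθ₁⟩ := phase l hl
  obtain ⟨θ₂, hθ₂⟩ := phase α hα
  have hml : star (m * l⁻¹) * (m * l⁻¹) = 1 := by
    have : star (m * l⁻¹) * (m * l⁻¹) = (star m * m) * (star l * l)⁻¹ := by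
      rw [star_mul', star_inv₀, mul_inv]; ring
    rw [this, hm, hl]; simp
  have hδα : star (δ * α⁻¹) * (δ * α⁻¹) = 1 := by
    have : star (δ * α⁻¹) * (δ * α⁻¹) = (star δ * δ) * (star α * α)⁻¹ := by
      rw [star_mul', star_inv₀, mul_inv]; ring
    rw [this, hδ, hα]; simp
  obtain ⟨θ, hθ⟩ := phase (m * l⁻¹) hml
  obtain ⟨θ', hθ'⟩ := phase (δ * α⁻¹) hδα
  have hmval : m = Complex.exp (Complex.I*θ₁) * Complex.exp (Complex.I*θ) := by
    rw [← hθ₁, ← hθ]; field_simp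
  have hδval : δ = Complex.exp (Complex.I*θ₂) * Complex.exp (Complex.I*θ') := by
    rw [← hθ₂, ← hθ']; field_simp
  refine ⟨hcom, v₁, v₂, θ₁, θ, θ₂, θ', h1, h2, h12, ?_, ?_⟩
  · rw [smul_add, smul_smul, ← hmval, ← hθ₁]; exact hU₁d
  · rw [smul_add, smul_smul, ← hδval, ← hθ₂]; exact hU₂d
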